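/- Let Δ_{3k} be the clique complex of the complement of the path P_{3k} on [3k]. Then Δ_{3k} has a unique facet of cardinality k, namely F_0 = {2,5,8,...,3k-1}, and every proper subset of F_0 is contained in a facet of Δ_{3k} of cardinality greater than k. -/
import Mathlib


open Finset

attribute [local instance] Classical.propDecidable

/-- `s` is a face of the clique complex `Δ_n = Δ(P_nᶜ)` of the complement of the path
`P_n` on `[n] = {1, …, n}`: a subset of `[n]` whose elements have pairwise differences
at least 2. -/
def isFaceP (n : ℕ) (s : Finset ℕ) : Prop :=
  s ⊆ Finset.Icc 1 n ∧ ∀ i ∈ s, ∀ j ∈ s, i < j → i + 2 ≤ j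

/-- `s` is a facet (maximal face) of `Δ_n = Δ(P_nᶜ)`. -/
def isFacetP (n : ℕ) (s : Finset ℕ) : Prop :=
  isFaceP n s ∧ ∀ t, isFaceP n t → s ⊆ t → t = s

/-- If `F` is a facet and `x ∈ [1,n]` is at distance ≥ 2 from every element of `F`,
then `x ∈ F`. -/
lemma facetP_mem (n : ℕ) (F : Finset ℕ) (hF : isFacetP n F) (x : ℕ)
    (hx1 : 1 ≤ x) (hx2 : x ≤ n) (h : ∀ b ∈ F, b + 2 ≤ x ∨ x + 2 ≤ b) : x ∈ F := by
  have hface : isFaceP n (insert x F) := by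
    constructor
    · intro y hy
      rcases Finset.mem_insert.mp hy with rfl | hy
      · exact Finset.mem_Icc.mpr ⟨hx1, hx2⟩
      · exact hF.1.1 hy
    · intro a ha b hb hab
      rcases Finset.mem_insert.mp ha with ha' | ha'
      · subst ha'
        rcases Finset.mem_insert.mp hb with hb' | hb'
        · omega
        · have := h b hb'; omega
      · rcases Finset.mem_insert.mp hb with hb' | hb'
        · subst hb'
          have := h a ha'; omega
        · exact hF.1.2 a ha' b hb' hab
  have heq := hF.2 _ hface (Finset.subset_insert _ _)
  exact heq ▸ Finset.mem_insert_self x F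

/-- Every face is contained in some facet. -/
lemma exists_facetP_ext (n : ℕ) (s : Finset ℕ) (hs : isFaceP n s) :
    ∃ t, isFacetP n t ∧ s ⊆ t := by
  classical
  set C : Finset (Finset ℕ) :=
    ((Finset.Icc 1 n).powerset).filter (fun t => isFaceP n t ∧ s ⊆ t) with hC
  have hsC : s ∈ C := by
    simp only [hC, Finset.mem_filter, Finset.mem_powerset]
    exact ⟨hs.1, hs, Finset.Subset.refl s⟩
  obtain ⟨t, htC, hmax⟩ := C.exists_max_image Finset.card ⟨s, hsC⟩
  simp only [hC, Finset.mem_filter, Finset.mem_powerset] at htC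
  refine ⟨t, ⟨htC.2.1, ?_⟩, htC.2.2⟩
  intro u hu hsu
  have huC : u ∈ C := by
    simp only [hC, Finset.mem_filter, Finset.mem_powerset]
    exact ⟨hu.1, hu, htC.2.2.trans hsu⟩
  exact (Finset.eq_of_subset_of_card_le hsu (hmax u huC)).symm

/-- Every facet of `Δ_{3k}` meets each block `[3i+1, 3i+3]`, `i < k`. -/
lemma facetP_block (k : ℕ) (F : Finset ℕ) (hF : isFacetP (3 * k) F) (i : ℕ) (hi : i < k) :
    ∃ a ∈ F, 3 * i + 1 ≤ a ∧ a ≤ 3 * i + 3 := by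
  by_contra h
  push_neg at h
  have hmem : (3 * i + 2) ∈ F := by
    apply facetP_mem (3 * k) F hF (3 * i + 2) (by omega) (by omega)
    intro b hb
    have := h b hb
    omega
  have := h _ hmem
  omega

/-- Every facet of `Δ_{3k}` has cardinality at least `k`. -/
lemma facetP_card_ge (k : ℕ) (F : Finset ℕ) (hF : isFacetP (3 * k) F) : k ≤ F.card := by
  have h : ∀ i, i < k → ∃ a, a ∈ F ∧ 3 * i + 1 ≤ a ∧ a ≤ 3 * i + 3 := by
    intro i hi
    obtain ⟨a, ha, h1, h2⟩ := facetP_block k F hF i hi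
    exact ⟨a, ha, h1, h2⟩
  choose f hf using h
  have : (Finset.range k).card ≤ F.card := by
    apply Finset.card_le_card_of_injOn (fun i => if hi : i < k then f i hi else 0)
    · intro i hi
      have hi' : i < k := Finset.mem_range.mp hi
      simp only [dif_pos hi']
      exact (hf i hi').1
    · intro i hi j hj hij
      have hi' : i < k := Finset.mem_range.mp (by simpa using hi)
      have hj' : j < k := Finset.mem_range.mp (by simpa using hj)
      simp only [dif_pos hi', dif_pos hj'] at hij
      have h1 := (hf i hi').2
      have h2 := (hf j hj').2
      omega
  simpa using this

/-- A facet of `Δ_{3k}` of cardinality exactly `k` is `F₀`. -/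
lemma facetP_card_eq (k : ℕ) (hk : 1 ≤ k) (F : Finset ℕ) (hF : isFacetP (3 * k) F)
    (hcard : F.card = k) : F = (Finset.range k).image fun i => 3 * i + 2 := by
  classical
  -- block decomposition
  set B : ℕ → Finset ℕ := fun i => F.filter (fun b => 3 * i + 1 ≤ b ∧ b ≤ 3 * i + 3) with hB
  have hcover : F = (Finset.range k).biUnion B := by
    apply Finset.Subset.antisymm
    · intro b hb
      have hb' := Finset.mem_Icc.mp (hF.1.1 hb)
      refine Finset.mem_biUnion.mpr ⟨(b - 1) / 3, Finset.mem_range.mpr (by omega), ?_⟩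
      simp only [hB, Finset.mem_filter]
      exact ⟨hb, by omega, by omega⟩
    · intro b hb
      obtain ⟨i, _, hbi⟩ := Finset.mem_biUnion.mp hb
      exact (Finset.mem_filter.mp hbi).1
  have hdisj : ∀ i ∈ Finset.range k, ∀ j ∈ Finset.range k, i ≠ j → Disjoint (B i) (B j) := by
    intro i _ j _ hij
    apply Finset.disjoint_left.mpr
    intro b hbi hbj
    have h1 := (Finset.mem_filter.mp hbi).2
    have h2 := (Finset.mem_filter.mp hbj).2
    omega
  have hsum : ∑ i ∈ Finset.range k, (B i).card = k := by
    rw [← Finset.card_biUnion hdisj, ← hcover, hcard]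
  have hone : ∀ i ∈ Finset.range k, 1 ≤ (B i).card := by
    intro i hi
    obtain ⟨a, ha, h1, h2⟩ := facetP_block k F hF i (Finset.mem_range.mp hi)
    exact Finset.card_pos.mpr ⟨a, Finset.mem_filter.mpr ⟨ha, h1, h2⟩⟩
  have hcards : ∀ i ∈ Finset.range k, (B i).card = 1 := by
    by_contra hcon
    push_neg at hcon
    obtain ⟨i0, hi0, hne⟩ := hcon
    have hlt : (∑ _i ∈ Finset.range k, 1) < ∑ i ∈ Finset.range k, (B i).card := by
      apply Finset.sum_lt_sum hone
      refine ⟨i0, hi0, ?_⟩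
      have := hone i0 hi0
      omega
    simp only [Finset.sum_const, Finset.card_range, smul_eq_mul, mul_one] at hlt
    omega
  -- the unique element of block i
  have hsingle : ∀ i, i < k → ∃ x, B i = {x} := by
    intro i hi
    exact Finset.card_eq_one.mp (hcards i (Finset.mem_range.mpr hi))
  choose a0 ha0 using hsingle
  set f : ℕ → ℕ := fun i => if hi : i < k then a0 i hi else 0 with hf
  have haF : ∀ i, i < k → f i ∈ F ∧ 3 * i + 1 ≤ f i ∧ f i ≤ 3 * i + 3 := by
    intro i hi
    have hmem : f i ∈ B i := by
      simp only [hf, dif_pos hi]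
      exact (ha0 i hi) ▸ Finset.mem_singleton_self _
    exact ⟨(Finset.mem_filter.mp hmem).1, (Finset.mem_filter.mp hmem).2⟩
  have hunique : ∀ i, i < k → ∀ b ∈ F, 3 * i + 1 ≤ b → b ≤ 3 * i + 3 → b = f i := by
    intro i hi b hb h1 h2
    have hmem : b ∈ B i := Finset.mem_filter.mpr ⟨hb, h1, h2⟩
    rw [ha0 i hi] at hmem
    simp only [hf, dif_pos hi]
    exact Finset.mem_singleton.mp hmem
  -- top block element is ≥ 3k - 1
  have htop : 3 * k - 1 ≤ f (k - 1) := by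
    by_contra hcon
    push_neg at hcon
    have hfk := haF (k - 1) (by omega)
    have hmem : (3 * k) ∈ F := by
      apply facetP_mem (3 * k) F hF (3 * k) (by omega) (by omega)
      intro b hb
      have hb' := Finset.mem_Icc.mp (hF.1.1 hb)
      by_cases hblk : 3 * (k - 1) + 1 ≤ b
      · have := hunique (k - 1) (by omega) b hb hblk (by omega)
        omega
      · omega
    have := hunique (k - 1) (by omega) (3 * k) hmem (by omega) (by omega)
    omega
  -- bottom block element is ≤ 2
  have hbot : f 0 ≤ 2 := by
    by_contra hcon
    push_neg at hcon
    have hf0 := haF 0 (by omega)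
    have hmem : (1 : ℕ) ∈ F := by
      apply facetP_mem (3 * k) F hF 1 (by omega) (by omega)
      intro b hb
      have hb' := Finset.mem_Icc.mp (hF.1.1 hb)
      by_cases hblk : b ≤ 3
      · have := hunique 0 (by omega) b hb (by omega) (by omega)
        omega
      · omega
    have := hunique 0 (by omega) 1 hmem (by omega) (by omega)
    omega
  -- consecutive gaps are ≤ 3
  have hgap : ∀ i, i + 1 < k → f (i + 1) ≤ f i + 3 := by
    intro i hi1
    by_contra hcon
    push_neg at hcon
    have hi : i < k := by omega
    have hai := haF i hi
    have hai1 := haF (i + 1) hi1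
    have hxmem : f i + 2 ∈ F := by
      apply facetP_mem (3 * k) F hF (f i + 2) (by omega) (by omega)
      intro b hb
      have hb' := Finset.mem_Icc.mp (hF.1.1 hb)
      by_cases hA : b ≤ 3 * i
      · omega
      · by_cases hBc : b ≤ 3 * i + 3
        · have := hunique i hi b hb (by omega) (by omega)
          omega
        · by_cases hCc : b ≤ 3 * (i + 1) + 3
          · have := hunique (i + 1) hi1 b hb (by omega) (by omega)
            omega
          · omega
    by_cases hxi : f i + 2 ≤ 3 * i + 3
    · have := hunique i hi (f i + 2) hxmem (by omega) (by omega)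
      omega
    · have := hunique (i + 1) hi1 (f i + 2) hxmem (by omega) (by omega)
      omega
  -- upper bound f i ≤ 3i + 2
  have hub : ∀ i, i < k → f i ≤ 3 * i + 2 := by
    intro i
    induction i with
    | zero => intro _; omega
    | succ n ih =>
      intro hi
      have h1 := ih (by omega)
      have h2 := hgap n hi
      omega
  -- lower bound f i ≥ 3i + 2 (downward induction)
  have hlbd : ∀ d, d < k → 3 * (k - 1 - d) + 2 ≤ f (k - 1 - d) := by
    intro d
    induction d with
    | zero =>
      intro _
      simp only [Nat.sub_zero]
      omega
    | succ n ih =>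
      intro hd
      have h1 := ih (by omega)
      have heq : k - 1 - n = (k - 1 - (n + 1)) + 1 := by omega
      rw [heq] at h1
      have h2 := hgap (k - 1 - (n + 1)) (by omega)
      omega
  have hlb : ∀ i, i < k → 3 * i + 2 ≤ f i := by
    intro i hi
    have h1 := hlbd (k - 1 - i) (by omega)
    have heq : k - 1 - (k - 1 - i) = i := by omega
    rw [heq] at h1
    exact h1
  -- conclude
  have hsub : F ⊆ (Finset.range k).image fun i => 3 * i + 2 := by
    intro b hb
    have hb' := Finset.mem_Icc.mp (hF.1.1 hb)
    set i := (b - 1) / 3 with hi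
    have hik : i < k := by omega
    have h0 := hunique i hik b hb (by omega) (by omega)
    have h1 := hub i hik
    have h2 := hlb i hik
    have hbeq : b = 3 * i + 2 := by omega
    exact Finset.mem_image.mpr ⟨i, Finset.mem_range.mpr hik, hbeq.symm⟩
  apply Finset.eq_of_subset_of_card_le hsub
  rw [Finset.card_image_of_injective _ (fun a b h => by omega), Finset.card_range, hcard]

theorem unique_facet_card_k_of_path3k (k : ℕ) (hk : 1 ≤ k)
    (F₀ : Finset ℕ) (hF₀ : F₀ = (Finset.range k).image fun i => 3 * i + 2) :
    (isFacetP (3 * k) F₀ ∧ F₀.card = k) ∧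
      (∀ F, isFacetP (3 * k) F → F.card = k → F = F₀) ∧
      ∀ F ⊂ F₀, ∃ F', isFacetP (3 * k) F' ∧ F ⊆ F' ∧ k < F'.card := by
  subst hF₀
  have hmemF₀ : ∀ b, b ∈ (Finset.range k).image (fun i => 3 * i + 2) ↔
      ∃ i, i < k ∧ b = 3 * i + 2 := by
    intro b
    simp only [Finset.mem_image, Finset.mem_range]
    constructor
    · rintro ⟨i, hi, rfl⟩; exact ⟨i, hi, rfl⟩
    · rintro ⟨i, hi, rfl⟩; exact ⟨i, hi, rfl⟩
  have hcardF₀ : ((Finset.range k).image fun i => 3 * i + 2).card = k := by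
    rw [Finset.card_image_of_injective _ (fun a b h => by omega), Finset.card_range]
  have hfaceF₀ : isFaceP (3 * k) ((Finset.range k).image fun i => 3 * i + 2) := by
    constructor
    · intro b hb
      obtain ⟨i, hi, rfl⟩ := (hmemF₀ b).mp hb
      exact Finset.mem_Icc.mpr ⟨by omega, by omega⟩
    · intro a ha b hb hab
      obtain ⟨i, hi, rfl⟩ := (hmemF₀ a).mp ha
      obtain ⟨j, hj, rfl⟩ := (hmemF₀ b).mp hb
      omega
  have hfacetF₀ : isFacetP (3 * k) ((Finset.range k).image fun i => 3 * i + 2) := by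
    refine ⟨hfaceF₀, ?_⟩
    intro t ht hsub
    apply Finset.Subset.antisymm _ hsub
    intro x hx
    have hx' := Finset.mem_Icc.mp (ht.1 hx)
    set i := (x - 1) / 3 with hi
    have hik : i < k := by omega
    have hy : (3 * i + 2) ∈ t := hsub ((hmemF₀ _).mpr ⟨i, hik, rfl⟩)
    by_cases hxy : x = 3 * i + 2
    · exact (hmemF₀ x).mpr ⟨i, hik, hxy⟩
    · exfalso
      rcases Nat.lt_or_ge x (3 * i + 2) with h | h
      · have := ht.2 x hx _ hy h
        omega
      · have hlt : 3 * i + 2 < x := by omega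
        have := ht.2 _ hy x hx hlt
        omega
  refine ⟨⟨hfacetF₀, hcardF₀⟩, ?_, ?_⟩
  · intro F hF hcard
    exact facetP_card_eq k hk F hF hcard
  · intro F hFss
    obtain ⟨x, hxF₀, hxF⟩ := Finset.exists_of_ssubset hFss
    obtain ⟨j, hj, rfl⟩ := (hmemF₀ x).mp hxF₀
    have hFsub : F ⊆ (Finset.range k).image fun i => 3 * i + 2 := hFss.subset
    have hrep : ∀ b ∈ F, ∃ m, m < k ∧ m ≠ j ∧ b = 3 * m + 2 := by
      intro b hb
      obtain ⟨m, hm, rfl⟩ := (hmemF₀ b).mp (hFsub hb)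
      refine ⟨m, hm, ?_, rfl⟩
      rintro rfl
      exact hxF hb
    set s : Finset ℕ := insert (3 * j + 1) (insert (3 * j + 3) F) with hs
    have hfaces : isFaceP (3 * k) s := by
      constructor
      · intro y hy
        simp only [hs, Finset.mem_insert] at hy
        rcases hy with rfl | rfl | hy
        · exact Finset.mem_Icc.mpr ⟨by omega, by omega⟩
        · exact Finset.mem_Icc.mpr ⟨by omega, by omega⟩
        · exact hfaceF₀.1 (hFsub hy)
      · intro a ha b hb hab
        simp only [hs, Finset.mem_insert] at ha hb
        rcases ha with rfl | rfl | ha <;> rcases hb with rfl | rfl | hb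
        · omega
        · omega
        · obtain ⟨m, hm, hmj, rfl⟩ := hrep b hb; omega
        · omega
        · omega
        · obtain ⟨m, hm, hmj, rfl⟩ := hrep b hb; omega
        · obtain ⟨m, hm, hmj, rfl⟩ := hrep a ha; omega
        · obtain ⟨m, hm, hmj, rfl⟩ := hrep a ha; omega
        · exact hfaceF₀.2 a (hFsub ha) b (hFsub hb) hab
    obtain ⟨F', hF', hsF'⟩ := exists_facetP_ext (3 * k) s hfaces
    refine ⟨F', hF', ?_, ?_⟩
    · exact fun b hb => hsF' (by simp [hs, Finset.mem_insert, hb])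
    · have hge := facetP_card_ge k F' hF'
      rcases Nat.lt_or_ge k F'.card with h | h
      · exact h
      · exfalso
        have hcard' : F'.card = k := by omega
        have := facetP_card_eq k hk F' hF' hcard'
        have hmem : (3 * j + 1) ∈ F' := hsF' (by simp [hs])
        rw [this] at hmem
        obtain ⟨m, hm, heq⟩ := (hmemF₀ _).mp hmem
        omega
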